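/- Let n ≥ 1 and let q = (q_1,…,q_n) : ℝ → ℝ^n be smooth. Then for all i, j ∈ {1,…,n} the components of the Killing vector fields in Viète coordinates are symmetric: (Z_i[q])^j = (Z_j[q])^i pointwise. -/

import Mathlib

noncomputable section

/-- The `j`-th component of the `i`-th Killing vector field in Viète coordinates,
`(Z_i[q])^j = ∂_x q_{j+i-1} + ∑_{k=1}^{j-1} (q_k ∂_x q_{j+i-k-1} - q_{j+i-k-1} ∂_x q_k)`,
with the convention `q_α := 0` for `α > n`; `Q` are the values, `Qx` the `x`-derivatives. -/
def killingZ (n i j : ℕ) (Q Qx : ℕ → ℝ) : ℝ :=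
  (if j + i - 1 ≤ n then Qx (j + i - 1) else 0) +
    ∑ k ∈ Finset.Icc 1 (j - 1),
      ((if k ≤ n then Q k else 0) * (if j + i - k - 1 ≤ n then Qx (j + i - k - 1) else 0) -
        (if j + i - k - 1 ≤ n then Q (j + i - k - 1) else 0) * (if k ≤ n then Qx k else 0))

/-- Reindex a vector of `ℝ^n` as a 1-based `ℕ`-indexed family (zero outside `1..n`). -/
def extQ (n : ℕ) (Q : Fin n → ℝ) : ℕ → ℝ := fun a =>
  if h : 1 ≤ a ∧ a ≤ n then Q ⟨a - 1, by omega⟩ else 0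

lemma killingZ_symm (n i j : ℕ) (hi : 1 ≤ i) (hj : 1 ≤ j) (Q Qx : ℕ → ℝ) :
    killingZ n i j Q Qx = killingZ n j i Q Qx := by
  wlog h : i ≤ j with H
  · exact (H n j i hj hi Q Qx (le_of_not_ge h)).symm
  unfold killingZ
  rw [Nat.add_comm j i]
  set s := i + j - 1 with hs
  set f : ℕ → ℝ := fun k =>
    (if k ≤ n then Q k else 0) * (if s - k ≤ n then Qx (s - k) else 0) -
      (if s - k ≤ n then Q (s - k) else 0) * (if k ≤ n then Qx k else 0) with hf
  have hidx : ∀ k : ℕ, i + j - k - 1 = s - k := fun k => by omega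
  have h1 : ∀ m : ℕ, (∑ k ∈ Finset.Icc 1 m,
      ((if k ≤ n then Q k else 0) * (if i + j - k - 1 ≤ n then Qx (i + j - k - 1) else 0) -
        (if i + j - k - 1 ≤ n then Q (i + j - k - 1) else 0) * (if k ≤ n then Qx k else 0))) =
      ∑ k ∈ Finset.Icc 1 m, f k := by
    intro m
    refine Finset.sum_congr rfl fun k _ => ?_
    rw [hidx k]
  rw [h1, h1]
  congr 1
  have hIcc : ∀ m : ℕ, Finset.Icc 1 m = Finset.Ioc 0 m := fun m => by
    rw [← Finset.Icc_add_one_left_eq_Ioc, zero_add]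
  rw [hIcc, hIcc,
    ← Finset.sum_Ioc_consecutive f (Nat.zero_le (i - 1)) (by omega : i - 1 ≤ j - 1)]
  have hzero : ∑ k ∈ Finset.Ioc (i - 1) (j - 1), f k = 0 := by
    apply Finset.sum_involution (fun k _ => s - k)
    · intro k hk
      simp only [Finset.mem_Ioc] at hk
      have hk2 : s - (s - k) = k := by omega
      simp only [hf, hk2]
      ring
    · intro k hk hne heq
      simp only [Finset.mem_Ioc] at hk
      have : s - k = k := heq
      apply hne
      simp only [hf, this]
      ring
    · intro k hk
      simp only [Finset.mem_Ioc] at hk ⊢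
      omega
    · intro k hk
      simp only [Finset.mem_Ioc] at hk
      omega
  rw [hzero, add_zero]

theorem killing_fields_symmetric (n : ℕ) (hn : 1 ≤ n) (q : ℝ → Fin n → ℝ)
    (hq : ContDiff ℝ (⊤ : ℕ∞) q) (i j : ℕ) (hi1 : 1 ≤ i) (hi2 : i ≤ n)
    (hj1 : 1 ≤ j) (hj2 : j ≤ n) (x : ℝ) :
    killingZ n i j (extQ n (q x)) (extQ n (deriv q x)) =
      killingZ n j i (extQ n (q x)) (extQ n (deriv q x)) := by
  exact killingZ_symm n i j hi1 hj1 _ _
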